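/- arXiv:quant-ph/0309177 — 4 statements merged into one kernel-verified Lean document; each statement's English description precedes it below -/
import Mathlib

section
/- Let n ≥ 2 and let x_1,…,x_n : ℝ → ℝ be functions, each differentiable at 0, whose values x_1(0),…,x_n(0) are pairwise distinct, strictly positive, and sum to 1. Suppose that for all t in a neighbourhood of 0 the ratios e_j(x(t))/e_1(x(t)) remain equal to their values at t = 0 for every j ∈ {2,…,n}, while 1/e_1(x(t)) = 1 + t. Then the function t ↦ −∑_{k=1}^n x_k(t)·ln(x_k(t)) is differentiable at 0 with derivative equal to 1 − Q, where Q = −∑_{k=1}^n (x_k(0)^n · ln x_k(0)) / P_k and P_k = ∏_{i≠k}(x_k(0) − x_i(0)). (Equivalently: viewing the Shannon entropy S as a function of t_1 = 1/s_1, t_2 = s_2/s_1, …, t_n = s_n/s_1, at points with s_1 = 1 the subentropy is Q = 1 − ∂S/∂t_1.) -/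
/-- The `j`-th elementary symmetric polynomial of `x : Fin n → ℝ`. -/
noncomputable def esymm (n j : ℕ) (x : Fin n → ℝ) : ℝ :=
  ∑ s ∈ Finset.powersetCard j (Finset.univ : Finset (Fin n)), ∏ u ∈ s, x u

lemma esymm_one {n : ℕ} (z : Fin n → ℝ) : esymm n 1 z = ∑ k, z k := by
  unfold esymm
  rw [Finset.powersetCard_one, Finset.sum_map]
  simp

lemma expand {n : ℕ} (c : ℝ) (z : Fin n → ℝ) :
    ∏ i, (1 + c * z i) = ∑ j ∈ Finset.range (n + 1), c ^ j * esymm n j z := by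
  have h : ∀ i : Fin n, (1 : ℝ) + c * z i = c * z i + 1 := fun i => by ring
  simp_rw [h]
  rw [Finset.prod_add, Finset.sum_powerset]
  rw [Finset.card_univ, Fintype.card_fin]
  refine Finset.sum_congr rfl fun j _ => ?_
  unfold esymm
  rw [Finset.mul_sum]
  refine Finset.sum_congr rfl fun s hs => ?_
  have hcard : s.card = j := (Finset.mem_powersetCard.mp hs).2
  rw [Finset.prod_mul_distrib, Finset.prod_const, hcard]
  simp

/-- Viewing the Shannon entropy `S` as a function of `t_1 = 1/s_1, t_2 = s_2/s_1, …,
t_n = s_n/s_1`, at points with `s_1 = 1` one has `∂S/∂t_1 = 1 − Q`, where `Q` is the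
subentropy. -/
theorem stmt_14 (n : ℕ) (hn : 2 ≤ n) (x : Fin n → ℝ → ℝ)
    (hdiff : ∀ k, DifferentiableAt ℝ (x k) 0)
    (hdist : ∀ k l, k ≠ l → x k 0 ≠ x l 0)
    (hpos : ∀ k, 0 < x k 0)
    (hsum : ∑ k, x k 0 = 1)
    (hfix : ∀ᶠ t in nhds (0 : ℝ), ∀ j, 2 ≤ j → j ≤ n →
      esymm n j (fun k => x k t) / esymm n 1 (fun k => x k t)
        = esymm n j (fun k => x k 0) / esymm n 1 (fun k => x k 0))
    (hvar : ∀ᶠ t in nhds (0 : ℝ), 1 / esymm n 1 (fun k => x k t) = 1 + t) :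
    HasDerivAt (fun t => -∑ k, x k t * Real.log (x k t))
      (1 - (-∑ k, (x k 0) ^ n * Real.log (x k 0) /
          ∏ i ∈ Finset.univ.erase k, (x k 0 - x i 0))) 0 := by
  classical
  set y : Fin n → ℝ := fun k => x k 0 with hy
  set d : Fin n → ℝ := fun k => deriv (x k) 0 with hd
  have hxd : ∀ k, HasDerivAt (x k) (d k) 0 := fun k => (hdiff k).hasDerivAt
  have hy1 : esymm n 1 y = 1 := by rw [esymm_one]; exact hsum
  have hyne : ∀ k, y k ≠ 0 := fun k => (hpos k).ne'
  -- eventually 1 + t ≠ 0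
  have hne : ∀ᶠ t in nhds (0 : ℝ), (1 : ℝ) + t ≠ 0 := by
    have : ∀ᶠ t in nhds (0 : ℝ), t ∈ Set.Ioo (-1 : ℝ) 1 :=
      Ioo_mem_nhds (by norm_num) (by norm_num)
    filter_upwards [this] with t ht
    have := ht.1; linarith
  -- eventually all esymm are c_j/(1+t)
  have hall : ∀ᶠ t in nhds (0 : ℝ), ∀ j, 1 ≤ j → j ≤ n →
      esymm n j (fun k => x k t) = esymm n j y / (1 + t) := by
    filter_upwards [hfix, hvar, hne] with t hf hv ht
    have hs1ne : esymm n 1 (fun k => x k t) ≠ 0 := by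
      intro h; rw [h, div_zero] at hv; exact ht hv.symm
    have hs1 : esymm n 1 (fun k => x k t) = 1 / (1 + t) := by
      field_simp at hv ⊢
      linarith [hv]
    intro j hj1 hjn
    rcases eq_or_lt_of_le hj1 with h1 | h1
    · rw [← h1, hs1, hy1]
    · have h2 : 2 ≤ j := h1
      have := hf j h2 hjn
      rw [hy1, div_one] at this
      have : esymm n j (fun k => x k t)
          = esymm n j y * esymm n 1 (fun k => x k t) := by
        field_simp at this
        linarith [this]
      rw [this, hs1]
      ring
  have honet : HasDerivAt (fun t : ℝ => 1 - (1 + t)⁻¹) 1 0 := by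
    have h1 : HasDerivAt (fun t : ℝ => 1 + t) 1 0 := by
      simpa using (hasDerivAt_id (0 : ℝ)).const_add 1
    have h2 : HasDerivAt (fun t : ℝ => (1 + t)⁻¹) (-1 / (1 + 0) ^ 2) 0 :=
      h1.inv (by norm_num)
    have := h2.const_sub 1
    simpa using this
  -- sum of derivatives = -1
  have hsumd : ∑ k, d k = -1 := by
    have hS : HasDerivAt (fun t => ∑ k, x k t) (∑ k, d k) 0 :=
      HasDerivAt.fun_sum fun k _ => hxd k
    have hev : (fun t => ∑ k, x k t) =ᶠ[nhds (0 : ℝ)] fun t => 1 - (1 - (1 + t)⁻¹) := by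
      filter_upwards [hall, hne] with t h ht
      have := h 1 le_rfl (by omega)
      rw [← esymm_one (fun k => x k t), this, hy1]
      field_simp
      ring
    have hS' : HasDerivAt (fun t : ℝ => 1 - (1 - (1 + t)⁻¹)) (∑ k, d k) 0 :=
      hev.hasDerivAt_iff.mp hS
    have h2 : HasDerivAt (fun t : ℝ => 1 - (1 - (1 + t)⁻¹)) (-1 : ℝ) 0 := by
      simpa using (honet.const_sub 1)
    exact hS'.unique h2
  -- key: derivative of each coordinate
  have hkey : ∀ k, d k = -(y k ^ n) / ∏ i ∈ Finset.univ.erase k, (y k - y i) := by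
    intro k
    set c : ℝ := -(y k)⁻¹ with hc
    set g : ℝ → ℝ := fun t => ∏ i, (1 + c * x i t) with hg
    have hPne : (∏ i ∈ Finset.univ.erase k, (y k - y i)) ≠ 0 :=
      Finset.prod_ne_zero_iff.mpr fun i hi =>
        sub_ne_zero.mpr (hdist k i (Finset.ne_of_mem_erase hi).symm)
    -- derivative of g
    have hgd : HasDerivAt g
        (∑ i, (∏ j ∈ Finset.univ.erase i, (1 + c * y j)) * (c * d i)) 0 := by
      have := HasDerivAt.fun_finsetProd (u := (Finset.univ : Finset (Fin n)))
        (f := fun i t => 1 + c * x i t) (f' := fun i => c * d i) (x := 0)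
        (fun i _ => ((hxd i).const_mul c).const_add 1)
      simpa [smul_eq_mul] using this
    -- only the k-term survives
    have hzero : (1 : ℝ) + c * y k = 0 := by
      rw [hc, neg_mul, inv_mul_cancel₀ (hyne k)]; ring
    have hterm : (∑ i, (∏ j ∈ Finset.univ.erase i, (1 + c * y j)) * (c * d i))
        = (∏ j ∈ Finset.univ.erase k, (1 + c * y j)) * (c * d k) := by
      rw [← Finset.sum_subset (Finset.subset_univ {k})]
      · simp
      · intro i _ hik
        have hik' : i ≠ k := by simpa using hik
        have : (∏ j ∈ Finset.univ.erase i, (1 + c * y j)) = 0 := by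
          apply Finset.prod_eq_zero (Finset.mem_erase.mpr ⟨hik'.symm, Finset.mem_univ k⟩)
          exact hzero
        rw [this, zero_mul]
    -- g eventually equals 1 - 1/(1+t)
    have hg0 : ∑ j ∈ Finset.range (n + 1), c ^ j * esymm n j y = 0 := by
      have := expand c y
      rw [← this]
      exact Finset.prod_eq_zero (Finset.mem_univ k) hzero
    have hgev : g =ᶠ[nhds (0 : ℝ)] fun t => 1 - (1 + t)⁻¹ := by
      filter_upwards [hall, hne] with t h ht
      have he : g t = ∑ j ∈ Finset.range (n + 1), c ^ j * esymm n j (fun i => x i t) :=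
        expand c (fun i => x i t)
      have hsplit : ∀ z : Fin n → ℝ, ∑ j ∈ Finset.range (n + 1), c ^ j * esymm n j z
          = 1 + ∑ j ∈ Finset.range n, c ^ (j + 1) * esymm n (j + 1) z := by
        intro z
        rw [Finset.sum_range_succ']
        have h0 : esymm n 0 z = 1 := by unfold esymm; simp
        rw [h0]; ring
      rw [he, hsplit]
      have : ∑ j ∈ Finset.range n, c ^ (j + 1) * esymm n (j + 1) (fun i => x i t)
          = (∑ j ∈ Finset.range n, c ^ (j + 1) * esymm n (j + 1) y) / (1 + t) := by
        rw [Finset.sum_div]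
        refine Finset.sum_congr rfl fun j hj => ?_
        rw [h (j + 1) (by omega) (by simpa using Finset.mem_range.mp hj)]
        ring
      rw [this]
      have hKey : ∑ j ∈ Finset.range n, c ^ (j + 1) * esymm n (j + 1) y = -1 := by
        have := hsplit y
        rw [hg0] at this
        linarith
      rw [hKey]
      ring
    have huniq : (∏ j ∈ Finset.univ.erase k, (1 + c * y j)) * (c * d k) = 1 := by
      rw [← hterm]
      exact hgd.unique (hgev.hasDerivAt_iff.mpr honet)
    -- simplify the product
    have hcard : (Finset.univ.erase k).card = n - 1 := by
      rw [Finset.card_erase_of_mem (Finset.mem_univ k), Finset.card_univ, Fintype.card_fin]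
    have hprod : (∏ j ∈ Finset.univ.erase k, (1 + c * y j))
        = (∏ j ∈ Finset.univ.erase k, (y k - y j)) / y k ^ (n - 1) := by
      have hstep : ∀ j ∈ Finset.univ.erase k, (1 + c * y j) = (y k - y j) / y k := by
        intro j _
        rw [hc, sub_div, div_self (hyne k), div_eq_mul_inv]
        ring
      rw [Finset.prod_congr rfl hstep, Finset.prod_div_distrib, Finset.prod_const, hcard]
    have hpow : y k ^ (n - 1) * y k = y k ^ n := by
      rw [← pow_succ]
      congr 1
      omega
    rw [hprod, hc] at huniq
    have hypne : y k ^ (n - 1) ≠ 0 := pow_ne_zero _ (hyne k)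
    field_simp at huniq
    rw [neg_div', div_eq_iff (hyne k)] at huniq
    rw [eq_div_iff hPne]
    linear_combination -huniq - hpow
  -- final assembly
  have hterm : ∀ k, HasDerivAt (fun t => x k t * Real.log (x k t))
      (d k * Real.log (y k) + d k) 0 := by
    intro k
    have hlog : HasDerivAt (fun t => Real.log (x k t)) ((y k)⁻¹ * d k) 0 := by
      have := (Real.hasDerivAt_log (hyne k)).comp 0 (hxd k)
      exact this
    have := (hxd k).fun_mul hlog
    convert this using 1
    show d k * Real.log (y k) + d k = d k * Real.log (y k) + y k * ((y k)⁻¹ * d k)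
    rw [mul_inv_cancel_left₀ (hyne k)]
    try ring
    all_goals rfl
  have hS : HasDerivAt (fun t => -∑ k, x k t * Real.log (x k t))
      (-∑ k, (d k * Real.log (y k) + d k)) 0 :=
    (HasDerivAt.fun_sum fun k _ => hterm k).neg
  convert hS using 1
  rw [Finset.sum_add_distrib, hsumd]
  have : ∑ k, d k * Real.log (y k)
      = ∑ k, -((y k) ^ n * Real.log (y k) / ∏ i ∈ Finset.univ.erase k, (y k - y i)) := by
    refine Finset.sum_congr rfl fun k _ => ?_
    rw [hkey k]
    ring
  rw [this]
  simp
  try ring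
end

section
/- Let n ≥ 2 and let x_1,…,x_n : ℝ → ℝ be functions, each differentiable at 0, whose values x_1(0),…,x_n(0) are pairwise distinct, strictly positive, and sum to 1. Define r_q(t) = e_{n−q}(x(t))/e_n(x(t)) for q = 1,…,n (with e_0 = 1). Suppose that for all t in a neighbourhood of 0, r_q(t) = r_q(0) for every q ∈ {1,…,n−1}, while r_n(t) = r_n(0) + t. Then the function t ↦ −∑_{k=1}^n x_k(t)·ln(x_k(t)) is differentiable at 0 with derivative equal to s_n·(1 − Q), where s_n = ∏_k x_k(0), Q = −∑_{k=1}^n (x_k(0)^n · ln x_k(0)) / P_k, and P_k = ∏_{i≠k}(x_k(0) − x_i(0)). (This is the alternative characterisation ∂S/∂r_n = s_n(s_1 − Q) of subentropy.) -/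
lemma esymm_zero_eq (n : ℕ) (y : Fin n → ℝ) : esymm n 0 y = 1 := by
  simp [esymm]

lemma esymm_one_eq (n : ℕ) (y : Fin n → ℝ) : esymm n 1 y = ∑ k, y k := by
  rw [esymm, Finset.powersetCard_one, Finset.sum_map]
  simp

lemma esymm_top_eq (n : ℕ) (y : Fin n → ℝ) : esymm n n y = ∏ k, y k := by
  have h : Finset.powersetCard n (Finset.univ : Finset (Fin n)) = {Finset.univ} := by
    have := Finset.powersetCard_self (Finset.univ : Finset (Fin n))
    simpa using this
  rw [esymm, h, Finset.sum_singleton]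

lemma prod_sub_eq (n : ℕ) (y : Fin n → ℝ) (z : ℝ) :
    ∏ k, (z - y k) = ∑ j ∈ Finset.range (n + 1), (-1 : ℝ) ^ j * z ^ (n - j) * esymm n j y := by
  classical
  have h1 : ∏ k, (z - y k) = ∏ k ∈ Finset.univ, ((fun k => -y k) k + (fun _ : Fin n => z) k) := by
    exact Finset.prod_congr rfl fun k _ => by ring
  rw [h1, Finset.prod_add, Finset.powerset_card_disjiUnion]
  erw [Finset.sum_disjiUnion]
  have hcard : (Finset.univ : Finset (Fin n)).card = n := by simp
  rw [hcard]
  refine Finset.sum_congr rfl fun j hj => ?_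
  rw [esymm, Finset.mul_sum]
  refine Finset.sum_congr rfl fun t ht => ?_
  obtain ⟨hts, htc⟩ := Finset.mem_powersetCard.mp ht
  have hneg : ∏ i ∈ t, -y i = (-1 : ℝ) ^ j * ∏ i ∈ t, y i := by
    rw [show (fun i => -y i) = fun i => (-1 : ℝ) * y i from funext fun i => by ring,
      Finset.prod_mul_distrib, Finset.prod_const, htc]
  have hcs : (Finset.univ \ t).card = n - j := by
    rw [Finset.card_sdiff_of_subset hts, hcard, htc]
  rw [hneg, Finset.prod_const, hcs]
  ring

/-- The alternative characterisation `∂S/∂r_n = s_n(s_1 − Q)` of the subentropy, where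
`r_q = e_{n−q}/e_n` and the Shannon entropy is viewed as a function of `r_1, …, r_n`
at a probability distribution (`s_1 = 1`). -/
theorem stmt_15 (n : ℕ) (hn : 2 ≤ n) (x : Fin n → ℝ → ℝ)
    (hdiff : ∀ k, DifferentiableAt ℝ (x k) 0)
    (hdist : ∀ k l, k ≠ l → x k 0 ≠ x l 0)
    (hpos : ∀ k, 0 < x k 0)
    (hsum : ∑ k, x k 0 = 1)
    (hfix : ∀ᶠ t in nhds (0 : ℝ), ∀ q, 1 ≤ q → q ≤ n - 1 →
      esymm n (n - q) (fun k => x k t) / esymm n n (fun k => x k t)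
        = esymm n (n - q) (fun k => x k 0) / esymm n n (fun k => x k 0))
    (hvar : ∀ᶠ t in nhds (0 : ℝ),
      esymm n 0 (fun k => x k t) / esymm n n (fun k => x k t)
        = esymm n 0 (fun k => x k 0) / esymm n n (fun k => x k 0) + t) :
    HasDerivAt (fun t => -∑ k, x k t * Real.log (x k t))
      ((∏ k, x k 0) * (1 - (-∑ k, (x k 0) ^ n * Real.log (x k 0) /
          ∏ i ∈ Finset.univ.erase k, (x k 0 - x i 0)))) 0 := by
  set a : Fin n → ℝ := fun k => x k 0 with ha
  set s : ℝ := ∏ k, a k with hsdef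
  have hspos : (0 : ℝ) < s := Finset.prod_pos fun k _ => hpos k
  have hsne : s ≠ 0 := ne_of_gt hspos
  have hsinv : (0 : ℝ) < s⁻¹ := by positivity
  set v : Fin n → ℝ := fun k => deriv (x k) 0 with hv
  have hvk : ∀ k, HasDerivAt (x k) (v k) 0 := fun k => (hdiff k).hasDerivAt
  -- eventual nonvanishing of s⁻¹ + t
  have h1 : ∀ᶠ t in nhds (0 : ℝ), s⁻¹ + t ≠ 0 := by
    have ht : Filter.Tendsto (fun t : ℝ => s⁻¹ + t) (nhds 0) (nhds (s⁻¹ + 0)) :=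
      (continuous_const.add continuous_id).continuousAt
    rw [add_zero] at ht
    exact ht.eventually_ne (ne_of_gt hsinv)
  -- key eventual description of all elementary symmetric polynomials
  have key : ∀ᶠ t in nhds (0 : ℝ), ∀ j, 1 ≤ j → j ≤ n →
      esymm n j (fun k => x k t) = esymm n j a * s⁻¹ * (s⁻¹ + t)⁻¹ := by
    filter_upwards [hfix, hvar, h1] with t hfixt hvart h1t
    have hE0 : esymm n n a = s := esymm_top_eq n a
    have hvart' : (esymm n n (fun k => x k t))⁻¹ = s⁻¹ + t := by
      rw [esymm_zero_eq, esymm_zero_eq, hE0] at hvart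
      rw [one_div, one_div] at hvart
      exact hvart
    have hEne : esymm n n (fun k => x k t) ≠ 0 := by
      intro h
      rw [h, inv_zero] at hvart'
      exact h1t hvart'.symm
    have hEt : esymm n n (fun k => x k t) = (s⁻¹ + t)⁻¹ := by
      rw [← hvart', inv_inv]
    intro j hj1 hjn
    rcases eq_or_lt_of_le hjn with hjeq | hjlt
    · subst hjeq
      rw [hEt, hE0, mul_inv_cancel₀ hsne, one_mul]
    · have hq1 : 1 ≤ n - j := by omega
      have hq2 : n - j ≤ n - 1 := by omega
      have := hfixt (n - j) hq1 hq2
      rw [Nat.sub_sub_self hjn] at this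
      rw [hE0] at this
      have : esymm n j (fun k => x k t) = esymm n j a / s * esymm n n (fun k => x k t) := by
        field_simp at this ⊢
        linarith [this]
      rw [this, hEt]
      ring
  -- derivative of (s⁻¹ + t)⁻¹ at 0
  have hinv : HasDerivAt (fun t : ℝ => (s⁻¹ + t)⁻¹) (-(s ^ 2)) 0 := by
    have h0 : s⁻¹ + (0 : ℝ) ≠ 0 := by rw [add_zero]; exact ne_of_gt hsinv
    have : HasDerivAt (fun t : ℝ => (s⁻¹ + t)⁻¹) _ 0 := ((hasDerivAt_id (0 : ℝ)).const_add s⁻¹).inv h0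
    convert this using 1
    simp only [id_eq, add_zero]
    rw [inv_pow]
    field_simp
  -- For each z, the derivative identity
  have hkey : ∀ z : ℝ, ∑ k, (∏ i ∈ Finset.univ.erase k, (z - a i)) * (-(v k))
      = -((∏ k, (z - a k)) - z ^ n) * s := by
    intro z
    have hprod : HasDerivAt (fun t => ∏ k, (z - x k t))
        (∑ k, (∏ i ∈ Finset.univ.erase k, (z - a i)) * (-(v k))) 0 := by
      have := HasDerivAt.fun_finsetProd (u := Finset.univ)
        (f := fun k t => z - x k t) (f' := fun k => -(v k)) (x := (0 : ℝ))
        (fun k _ => (hvk k).const_sub z)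
      simpa [smul_eq_mul] using this
    have heq : (fun t => ∏ k, (z - x k t)) =ᶠ[nhds (0 : ℝ)]
        (fun t => z ^ n + ((∏ k, (z - a k)) - z ^ n) * s⁻¹ * (s⁻¹ + t)⁻¹) := by
      filter_upwards [key, h1] with t hkt h1t
      rw [prod_sub_eq n (fun k => x k t) z, prod_sub_eq n a z]
      rw [Finset.sum_range_succ', Finset.sum_range_succ']
      simp only [esymm_zero_eq, pow_zero, one_mul, Nat.sub_zero, mul_one]
      have hterm : ∀ j ∈ Finset.range n,
          (-1 : ℝ) ^ (j + 1) * z ^ (n - (j + 1)) * esymm n (j + 1) (fun k => x k t)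
          = ((-1 : ℝ) ^ (j + 1) * z ^ (n - (j + 1)) * esymm n (j + 1) a) * (s⁻¹ * (s⁻¹ + t)⁻¹) := by
        intro j hj
        have hj' := Finset.mem_range.mp hj
        rw [hkt (j + 1) (by omega) (by omega)]
        ring
      rw [Finset.sum_congr rfl hterm, ← Finset.sum_mul]
      ring
    have hG : HasDerivAt
        (fun t => z ^ n + ((∏ k, (z - a k)) - z ^ n) * s⁻¹ * (s⁻¹ + t)⁻¹)
        (-((∏ k, (z - a k)) - z ^ n) * s) 0 := by
      have : HasDerivAt (fun t => z ^ n + ((∏ k, (z - a k)) - z ^ n) * s⁻¹ * (s⁻¹ + t)⁻¹) _ 0 :=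
        (hinv.const_mul (((∏ k, (z - a k)) - z ^ n) * s⁻¹)).const_add (z ^ n)
      convert this using 1
      field_simp
    have hF : HasDerivAt (fun t => ∏ k, (z - x k t))
        (-((∏ k, (z - a k)) - z ^ n) * s) 0 :=
      hG.congr_of_eventuallyEq heq
    exact hF.unique hprod ▸ rfl
  -- the value of each v m
  have hPne : ∀ m, (∏ i ∈ Finset.univ.erase m, (a m - a i)) ≠ 0 := by
    intro m
    refine Finset.prod_ne_zero_iff.mpr fun i hi => ?_
    have : m ≠ i := fun h => (Finset.mem_erase.mp hi).1 h.symm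
    exact sub_ne_zero_of_ne (hdist m i this)
  have hvm : ∀ m, v m = -(s * (a m) ^ n / ∏ i ∈ Finset.univ.erase m, (a m - a i)) := by
    intro m
    have h := hkey (a m)
    have hz : ∀ k ∈ Finset.univ, k ≠ m →
        (∏ i ∈ Finset.univ.erase k, (a m - a i)) * (-(v k)) = 0 := by
      intro k _ hk
      have hm : m ∈ Finset.univ.erase k := Finset.mem_erase.mpr ⟨hk.symm ∘ Eq.symm ∘ id ∘ Eq.symm, Finset.mem_univ m⟩
      rw [Finset.prod_eq_zero hm (by ring), zero_mul]
    rw [Finset.sum_eq_single_of_mem m (Finset.mem_univ m) hz] at h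
    have hzero : (∏ k, (a m - a k)) = 0 :=
      Finset.prod_eq_zero (Finset.mem_univ m) (by ring)
    rw [hzero] at h
    have hP := hPne m
    field_simp at h ⊢
    nlinarith [h]
  -- sum of the derivatives
  have hsumv : ∑ k, v k = -s := by
    have hS : HasDerivAt (fun t => ∑ k, x k t) (∑ k, v k) 0 :=
      HasDerivAt.fun_sum fun k _ => hvk k
    have heq : (fun t => ∑ k, x k t) =ᶠ[nhds (0 : ℝ)]
        (fun t => s⁻¹ * (s⁻¹ + t)⁻¹) := by
      filter_upwards [key] with t hkt
      have := hkt 1 le_rfl (by omega)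
      rw [esymm_one_eq, esymm_one_eq] at this
      rw [this]
      rw [ha] at hsum ⊢
      rw [hsum]
      ring
    have hG : HasDerivAt (fun t => s⁻¹ * (s⁻¹ + t)⁻¹) (-s) 0 := by
      have : HasDerivAt (fun t => s⁻¹ * (s⁻¹ + t)⁻¹) _ 0 := hinv.const_mul s⁻¹
      convert this using 1
      field_simp
    have hF : HasDerivAt (fun t => ∑ k, x k t) (-s) 0 :=
      hG.congr_of_eventuallyEq heq
    exact (hF.unique hS).symm
  -- final derivative computation
  have hterm : ∀ k, HasDerivAt (fun t => x k t * Real.log (x k t))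
      (v k * Real.log (a k) + v k) 0 := by
    intro k
    have hlog : HasDerivAt (fun t => Real.log (x k t)) ((a k)⁻¹ * v k) 0 := by
      have := (Real.hasDerivAt_log (ne_of_gt (hpos k))).comp 0 (hvk k)
      exact this
    have : HasDerivAt (fun t => x k t * Real.log (x k t)) _ 0 := (hvk k).fun_mul hlog
    convert this using 1
    show v k * Real.log (a k) + v k = v k * Real.log (a k) + a k * ((a k)⁻¹ * v k)
    rw [← mul_assoc, mul_inv_cancel₀ (ne_of_gt (hpos k)), one_mul]
  have hfinal : HasDerivAt (fun t => -∑ k, x k t * Real.log (x k t))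
      (-∑ k, (v k * Real.log (a k) + v k)) 0 :=
    (HasDerivAt.fun_sum fun k _ => hterm k).fun_neg
  convert hfinal using 1
  rw [Finset.sum_add_distrib, hsumv]
  have hlogsum : ∀ k, v k * Real.log (a k)
      = (-s) * ((a k) ^ n * Real.log (a k) / ∏ i ∈ Finset.univ.erase k, (a k - a i)) := by
    intro k
    rw [hvm k]
    have hP := hPne k
    field_simp
  rw [Finset.sum_congr rfl fun k _ => hlogsum k]
  simp only [show ∀ k : Fin n, x k 0 = a k from fun _ => rfl]
  rw [← Finset.mul_sum]
  ring
end

section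
/- Let n ≥ 2 and let x_1,…,x_n : ℝ → ℝ be functions, each differentiable at 0, whose values x_1(0),…,x_n(0) are pairwise distinct and strictly positive. Fix q with 2 ≤ q ≤ n and suppose that for all t in a neighbourhood of 0 the elementary symmetric polynomials satisfy e_j(x(t)) = e_j(x(0)) for every j ∈ {1,…,n} with j ≠ q, while e_q(x(t)) = e_q(x(0)) + t. Then for each k, the derivative of x_k at 0 equals (−1)^{q+1} · x_k(0)^{n−q} / P_k, where P_k = ∏_{i≠k}(x_k(0) − x_i(0)). (This is the formula ∂x_k/∂s_q = (−1)^{q+1} x_k^{n−q} / ∏_{i≠k}(x_k − x_i) for the derivative of a root of the characteristic polynomial with respect to its coefficients.) -/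
lemma esymm_zero' (n : ℕ) (x : Fin n → ℝ) : esymm n 0 x = 1 := by
  simp [esymm]

/-- Vieta-type expansion: `∏ i (y - x i) = ∑ j (-1)^j e_j y^(n-j)`. -/
lemma prod_sub_eq_sum_esymm (n : ℕ) (y : ℝ) (x : Fin n → ℝ) :
    ∏ i, (y - x i) = ∑ j ∈ Finset.range (n + 1),
      (-1 : ℝ) ^ j * esymm n j x * y ^ (n - j) := by
  calc ∏ i, (y - x i) = ∏ i : Fin n, ((fun i => -x i) i + (fun _ : Fin n => y) i) := by
        apply Finset.prod_congr rfl; intros; ring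
    _ = ∑ t ∈ (Finset.univ : Finset (Fin n)).powerset,
          (∏ i ∈ t, -x i) * ∏ _i ∈ Finset.univ \ t, y :=
        Finset.prod_add _ _ _
    _ = ∑ j ∈ Finset.range (n + 1), ∑ t ∈ Finset.powersetCard j (Finset.univ : Finset (Fin n)),
          (∏ i ∈ t, -x i) * ∏ _i ∈ Finset.univ \ t, y := by
        rw [Finset.sum_powerset]; simp
    _ = ∑ j ∈ Finset.range (n + 1), (-1 : ℝ) ^ j * esymm n j x * y ^ (n - j) := by
        refine Finset.sum_congr rfl fun j hj => ?_
        rw [esymm, Finset.mul_sum, Finset.sum_mul]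
        refine Finset.sum_congr rfl fun t ht => ?_
        have hc : t.card = j := (Finset.mem_powersetCard.mp ht).2
        have hneg : ∏ i ∈ t, -x i = (-1 : ℝ) ^ j * ∏ i ∈ t, x i := by
          rw [← hc, ← Finset.prod_const (-1 : ℝ), ← Finset.prod_mul_distrib]
          exact Finset.prod_congr rfl fun i _ => by ring
        have hcard : (Finset.univ \ t).card = n - j := by
          rw [Finset.card_sdiff_of_subset (Finset.subset_univ t), hc, Finset.card_univ, Fintype.card_fin]
        rw [hneg, Finset.prod_const, hcard]
        try ring

/-- The formula `∂x_k/∂s_q = (−1)^{q+1} x_k^{n−q} / ∏_{i≠k}(x_k − x_i)` for the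
derivative of a root of the characteristic polynomial with respect to its
coefficients. -/
theorem stmt_17 (n : ℕ) (hn : 2 ≤ n) (x : Fin n → ℝ → ℝ)
    (hdiff : ∀ k, DifferentiableAt ℝ (x k) 0)
    (hdist : ∀ k l, k ≠ l → x k 0 ≠ x l 0)
    (hpos : ∀ k, 0 < x k 0)
    (q : ℕ) (hq2 : 2 ≤ q) (hqn : q ≤ n)
    (hfix : ∀ᶠ t in nhds (0 : ℝ), ∀ j, 1 ≤ j → j ≤ n → j ≠ q →
      esymm n j (fun k => x k t) = esymm n j (fun k => x k 0))
    (hvar : ∀ᶠ t in nhds (0 : ℝ),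
      esymm n q (fun k => x k t) = esymm n q (fun k => x k 0) + t) :
    ∀ k, deriv (x k) 0 = (-1 : ℝ) ^ (q + 1) * (x k 0) ^ (n - q) /
        ∏ i ∈ Finset.univ.erase k, (x k 0 - x i 0) := by
  intro k
  set y : ℝ := x k 0 with hy
  set F : ℝ → ℝ := fun t => ∏ i, (y - x i t) with hF
  -- derivative of F via the product rule
  have hder : HasDerivAt F
      (∑ i : Fin n, (∏ j ∈ Finset.univ.erase i, (y - x j 0)) • (-(deriv (x i) 0))) 0 := by
    apply HasDerivAt.fun_finsetProd
    intro i _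
    exact ((hdiff i).hasDerivAt).const_sub y
  -- the sum collapses to the k-th term
  have hsum : (∑ i : Fin n, (∏ j ∈ Finset.univ.erase i, (y - x j 0)) • (-(deriv (x i) 0)))
      = (∏ j ∈ Finset.univ.erase k, (y - x j 0)) * (-(deriv (x k) 0)) := by
    rw [Finset.sum_eq_single k]
    · simp [smul_eq_mul]
    · intro i _ hik
      have hk : k ∈ Finset.univ.erase i := Finset.mem_erase.mpr ⟨fun h => hik h.symm, Finset.mem_univ k⟩
      rw [Finset.prod_eq_zero hk (by simp [hy])]
      simp
    · simp
  -- F is eventually affine near 0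
  have heq : F =ᶠ[nhds (0 : ℝ)] fun t => F 0 + (-1 : ℝ) ^ q * y ^ (n - q) * t := by
    filter_upwards [hfix, hvar] with t h1 h2
    have hqmem : q ∈ Finset.range (n + 1) := Finset.mem_range.mpr (Nat.lt_succ_of_le hqn)
    have key : ∀ j ∈ Finset.range (n + 1),
        (-1 : ℝ) ^ j * esymm n j (fun i => x i t) * y ^ (n - j)
          = ((-1 : ℝ) ^ j * esymm n j (fun i => x i 0) * y ^ (n - j))
            + (if j = q then (-1 : ℝ) ^ q * y ^ (n - q) * t else 0) := by
      intro j hj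
      by_cases hjq : j = q
      · subst hjq
        rw [h2, if_pos rfl]; ring
      · rw [if_neg hjq, add_zero]
        rcases Nat.eq_zero_or_pos j with h0 | h0
        · subst h0; rw [esymm_zero', esymm_zero']
        · rw [h1 j h0 (Nat.lt_succ_iff.mp (Finset.mem_range.mp hj)) hjq]
    calc F t = ∑ j ∈ Finset.range (n + 1),
          (-1 : ℝ) ^ j * esymm n j (fun i => x i t) * y ^ (n - j) :=
        prod_sub_eq_sum_esymm n y _
      _ = (∑ j ∈ Finset.range (n + 1),
            (-1 : ℝ) ^ j * esymm n j (fun i => x i 0) * y ^ (n - j))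
          + ∑ j ∈ Finset.range (n + 1),
            (if j = q then (-1 : ℝ) ^ q * y ^ (n - q) * t else 0) := by
          rw [← Finset.sum_add_distrib]; exact Finset.sum_congr rfl key
      _ = F 0 + (-1 : ℝ) ^ q * y ^ (n - q) * t := by
          have hF0 : F 0 = ∑ j ∈ Finset.range (n + 1),
              (-1 : ℝ) ^ j * esymm n j (fun i => x i 0) * y ^ (n - j) :=
            prod_sub_eq_sum_esymm n y _
          rw [Finset.sum_ite_eq' _ q, if_pos hqmem, hF0]
  -- hence deriv F 0 = (-1)^q y^(n-q)
  have hder2 : HasDerivAt (fun t : ℝ => F 0 + (-1 : ℝ) ^ q * y ^ (n - q) * t)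
      ((-1 : ℝ) ^ q * y ^ (n - q)) 0 := by
    simpa using ((hasDerivAt_id (0 : ℝ)).const_mul ((-1 : ℝ) ^ q * y ^ (n - q))).const_add (F 0)
  have hd1 : deriv F 0 = (∏ j ∈ Finset.univ.erase k, (y - x j 0)) * (-(deriv (x k) 0)) := by
    rw [hder.deriv, hsum]
  have hd2 : deriv F 0 = (-1 : ℝ) ^ q * y ^ (n - q) := by
    rw [heq.deriv_eq, hder2.deriv]
  have E : (∏ j ∈ Finset.univ.erase k, (y - x j 0)) * (-(deriv (x k) 0))
      = (-1 : ℝ) ^ q * y ^ (n - q) := by rw [← hd1, hd2]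
  have hP : (∏ j ∈ Finset.univ.erase k, (y - x j 0)) ≠ 0 := by
    apply Finset.prod_ne_zero_iff.mpr
    intro i hi
    exact sub_ne_zero.mpr (hdist k i (Finset.ne_of_mem_erase hi).symm)
  rw [eq_div_iff hP, pow_succ]
  linear_combination -E
end

section
/- Let n ≥ 2 and let x_1,…,x_n : ℝ → ℝ be functions, each differentiable at 0, whose values x_1(0),…,x_n(0) are pairwise distinct and strictly positive. Fix q with 2 ≤ q ≤ n and suppose that for all t in a neighbourhood of 0 the elementary symmetric polynomials satisfy e_j(x(t)) = e_j(x(0)) for every j ∈ {1,…,n} with j ≠ q, while e_q(x(t)) = e_q(x(0)) + t. Then the function t ↦ −∑_{k=1}^n x_k(t)·ln(x_k(t)) is differentiable at 0 with derivative equal to (−1)^q · ∑_{k=1}^n (x_k(0)^{n−q} · ln x_k(0)) / P_k, where P_k = ∏_{i≠k}(x_k(0) − x_i(0)). (This is the formula ∂S/∂s_q = (−1)^q Σ_k x_k^{n−q} ln x_k / ∏_{i≠k}(x_k − x_i) for the Shannon entropy as a function of the elementary symmetric polynomials.) -/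
open Finset Polynomial in
lemma key_prod {ι : Type*} [DecidableEq ι] (s : Finset ι) (f : ι → ℝ) (y : ℝ) :
    ∏ i ∈ s, (y - f i) =
      ∑ j ∈ Finset.range (s.card + 1),
        (-1 : ℝ) ^ j * (∑ t ∈ s.powersetCard j, ∏ u ∈ t, f u) * y ^ (s.card - j) := by
  set T : ℝ[X] := ((s.val.map f).map (fun r => X - C r)).prod with hT
  have hdeg : T.natDegree = s.card := by
    rw [hT, natDegree_multiset_prod_X_sub_C_eq_card, Multiset.card_map, Finset.card_def]
  have h1 : ∏ i ∈ s, (y - f i) = T.eval y := by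
    rw [hT, Polynomial.eval_multiset_prod, Multiset.map_map, Multiset.map_map]
    rw [Finset.prod_eq_multiset_prod]
    congr 1
    apply Multiset.map_congr rfl
    intro i _
    simp
  have h2 : T.eval y = ∑ i ∈ Finset.range (s.card + 1), T.coeff i * y ^ i := by
    rw [eval_eq_sum_range' (by omega : T.natDegree < s.card + 1)]
  have h3 : ∀ i ∈ Finset.range (s.card + 1),
      T.coeff i * y ^ i =
        (-1 : ℝ) ^ (s.card - i) * (∑ t ∈ s.powersetCard (s.card - i), ∏ u ∈ t, f u) * y ^ i := by
    intro i hi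
    rw [Finset.mem_range] at hi
    have hle : i ≤ Multiset.card (s.val.map f) := by
      rw [Multiset.card_map, ← Finset.card_def]; omega
    rw [hT, Multiset.prod_X_sub_C_coeff _ hle]
    rw [Multiset.card_map, Finset.esymm_map_val, ← Finset.card_def]
  rw [h1, h2, Finset.sum_congr rfl h3]
  rw [← Finset.sum_range_reflect]
  refine Finset.sum_congr rfl fun j hj => ?_
  rw [Finset.mem_range] at hj
  have h4 : s.card - (s.card + 1 - 1 - j) = j := by omega
  have h5 : s.card + 1 - 1 - j = s.card - j := by omega
  rw [h4, h5]

open Finset in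
lemma hasDerivAt_esymm_comp (n j : ℕ) (hj : 1 ≤ j) (x : Fin n → ℝ → ℝ) (d : Fin n → ℝ)
    (hd : ∀ k, HasDerivAt (x k) (d k) 0) :
    HasDerivAt (fun t => esymm n j (fun k => x k t))
      (∑ k : Fin n,
        (∑ t ∈ ((Finset.univ : Finset (Fin n)).erase k).powersetCard (j - 1), ∏ u ∈ t, x u 0)
          * d k) 0 := by
  have h1 : HasDerivAt (fun t => esymm n j (fun k => x k t))
      (∑ s ∈ powersetCard j (univ : Finset (Fin n)), ∑ u ∈ s,
        (∏ v ∈ s.erase u, x v 0) * d u) 0 := by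
    simp only [esymm]
    apply HasDerivAt.fun_sum
    intro s _
    have := HasDerivAt.fun_finset_prod (u := s) (f := fun u t => x u t) (f' := d) (x := (0:ℝ))
      (fun i _ => hd i)
    simpa [smul_eq_mul] using this
  convert h1 using 1
  have swap : ∀ g : Finset (Fin n) → Fin n → ℝ,
      ∑ s ∈ powersetCard j (univ : Finset (Fin n)), ∑ u ∈ s, g s u
        = ∑ u : Fin n, ∑ s ∈ (powersetCard j (univ : Finset (Fin n))).filter (fun s => u ∈ s),
            g s u := by
    intro g
    simp_rw [Finset.sum_filter]
    rw [Finset.sum_comm]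
    refine Finset.sum_congr rfl fun s _ => ?_
    rw [Finset.sum_ite_mem, Finset.univ_inter]
  rw [swap]
  refine Finset.sum_congr rfl fun u _ => ?_
  rw [← Finset.sum_mul]
  congr 1
  refine Finset.sum_nbij' (fun t => insert u t) (fun s => s.erase u) ?_ ?_ ?_ ?_ ?_
  · intro t ht
    rw [Finset.mem_powersetCard] at ht
    have hu : u ∉ t := fun h => (Finset.mem_erase.1 (ht.1 h)).1 rfl
    rw [Finset.mem_filter, Finset.mem_powersetCard_univ]
    refine ⟨?_, Finset.mem_insert_self u t⟩
    rw [Finset.card_insert_of_notMem hu, ht.2]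
    omega
  · intro s hs
    rw [Finset.mem_filter, Finset.mem_powersetCard_univ] at hs
    rw [Finset.mem_powersetCard]
    exact ⟨Finset.erase_subset_erase u (Finset.subset_univ s),
      by rw [Finset.card_erase_of_mem hs.2, hs.1]⟩
  · intro t ht
    rw [Finset.mem_powersetCard] at ht
    exact Finset.erase_insert (fun h => (Finset.mem_erase.1 (ht.1 h)).1 rfl)
  · intro s hs
    rw [Finset.mem_filter] at hs
    exact Finset.insert_erase hs.2
  · intro t ht
    rw [Finset.mem_powersetCard] at ht
    have hu : u ∉ t := fun h => (Finset.mem_erase.1 (ht.1 h)).1 rfl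
    rw [Finset.erase_insert hu]

noncomputable def Amat (n : ℕ) (x : Fin n → ℝ) : Matrix (Fin n) (Fin n) ℝ :=
  Matrix.of fun j l =>
    ∑ t ∈ ((Finset.univ : Finset (Fin n)).erase l).powersetCard (j : ℕ), ∏ u ∈ t, x u

noncomputable def Bmat (n : ℕ) (x : Fin n → ℝ) : Matrix (Fin n) (Fin n) ℝ :=
  Matrix.of fun k j =>
    (-1 : ℝ) ^ (j : ℕ) * x k ^ (n - 1 - (j : ℕ)) / ∏ i ∈ Finset.univ.erase k, (x k - x i)

lemma prod_diff_ne_zero {n : ℕ} (x : Fin n → ℝ) (hdist : ∀ k l, k ≠ l → x k ≠ x l) (k : Fin n) :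
    (∏ i ∈ Finset.univ.erase k, (x k - x i)) ≠ 0 := by
  refine Finset.prod_ne_zero_iff.2 fun i hi => ?_
  exact sub_ne_zero.2 (hdist k i (Ne.symm (Finset.mem_erase.1 hi).1))

lemma key_eval {n : ℕ} (hn : 1 ≤ n) (x : Fin n → ℝ) (l k : Fin n) :
    ∑ j ∈ Finset.range n, (-1 : ℝ) ^ j *
        (∑ t ∈ ((Finset.univ : Finset (Fin n)).erase l).powersetCard j, ∏ u ∈ t, x u)
        * x k ^ (n - 1 - j)
      = ∏ i ∈ Finset.univ.erase l, (x k - x i) := by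
  have hc : ((Finset.univ : Finset (Fin n)).erase l).card = n - 1 := by
    rw [Finset.card_erase_of_mem (Finset.mem_univ l), Finset.card_univ, Fintype.card_fin]
  have h := key_prod ((Finset.univ : Finset (Fin n)).erase l) x (x k)
  rw [hc, Nat.sub_add_cancel hn] at h
  exact h.symm

lemma Bmat_mul_Amat {n : ℕ} (hn : 1 ≤ n) (x : Fin n → ℝ)
    (hdist : ∀ k l, k ≠ l → x k ≠ x l) : Bmat n x * Amat n x = 1 := by
  ext k l
  rw [Matrix.mul_apply]
  have hPne := prod_diff_ne_zero x hdist k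
  have hs : ∑ j : Fin n, Bmat n x k j * Amat n x j l
      = (∑ j ∈ Finset.range n, (-1 : ℝ) ^ j *
          (∑ t ∈ ((Finset.univ : Finset (Fin n)).erase l).powersetCard j, ∏ u ∈ t, x u)
          * x k ^ (n - 1 - j)) / ∏ i ∈ Finset.univ.erase k, (x k - x i) := by
    rw [Finset.sum_div, ← Fin.sum_univ_eq_sum_range]
    refine Finset.sum_congr rfl fun j _ => ?_
    simp only [Amat, Bmat, Matrix.of_apply]
    ring
  rw [hs, key_eval hn x l k]
  by_cases hkl : k = l
  · subst hkl
    rw [div_self hPne, Matrix.one_apply_eq]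
  · rw [Finset.prod_eq_zero (Finset.mem_erase.2 ⟨hkl, Finset.mem_univ k⟩) (sub_self (x k)),
      zero_div, Matrix.one_apply_ne hkl]

open Finset in
/-- The formula `∂S/∂s_q = (−1)^q ∑_k x_k^{n−q} ln x_k / ∏_{i≠k}(x_k − x_i)` for the
Shannon entropy viewed as a function of the elementary symmetric polynomials. -/
theorem stmt_18 (n : ℕ) (hn : 2 ≤ n) (x : Fin n → ℝ → ℝ)
    (hdiff : ∀ k, DifferentiableAt ℝ (x k) 0)
    (hdist : ∀ k l, k ≠ l → x k 0 ≠ x l 0)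
    (hpos : ∀ k, 0 < x k 0)
    (q : ℕ) (hq2 : 2 ≤ q) (hqn : q ≤ n)
    (hfix : ∀ᶠ t in nhds (0 : ℝ), ∀ j, 1 ≤ j → j ≤ n → j ≠ q →
      esymm n j (fun k => x k t) = esymm n j (fun k => x k 0))
    (hvar : ∀ᶠ t in nhds (0 : ℝ),
      esymm n q (fun k => x k t) = esymm n q (fun k => x k 0) + t) :
    HasDerivAt (fun t => -∑ k, x k t * Real.log (x k t))
      ((-1 : ℝ) ^ q * ∑ k, (x k 0) ^ (n - q) * Real.log (x k 0) /
        ∏ i ∈ Finset.univ.erase k, (x k 0 - x i 0)) 0 := by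
  have hn1 : 1 ≤ n := by omega
  set a : Fin n → ℝ := fun k => x k 0 with ha
  have hdista : ∀ k l, k ≠ l → a k ≠ a l := hdist
  have hBA : Bmat n a * Amat n a = 1 := Bmat_mul_Amat hn1 a hdista
  have hAB : Amat n a * Bmat n a = 1 := mul_eq_one_comm.mpr hBA
  set d : Fin n → ℝ := fun k => deriv (x k) 0 with hdd
  have hd : ∀ k, HasDerivAt (x k) (d k) 0 := fun k => (hdiff k).hasDerivAt
  have hq1n : q - 1 < n := by omega
  set jq : Fin n := ⟨q - 1, hq1n⟩ with hjq
  -- the linear system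
  have hsys : (Amat n a).mulVec d = Pi.single jq 1 := by
    funext j
    have hder := hasDerivAt_esymm_comp n ((j : ℕ) + 1) (by omega) x d hd
    rw [Nat.add_sub_cancel] at hder
    have hlhs : (Amat n a).mulVec d j
        = ∑ k : Fin n,
          (∑ t ∈ ((Finset.univ : Finset (Fin n)).erase k).powersetCard (j : ℕ),
            ∏ u ∈ t, x u 0) * d k := by
      simp only [Matrix.mulVec, dotProduct, Amat, Matrix.of_apply]
      rfl
    by_cases hcase : j = jq
    · subst hcase
      have hq' : (jq : ℕ) + 1 = q := by simp only [hjq]; omega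
      rw [hq'] at hder
      have h2 : HasDerivAt (fun t => esymm n q (fun k => x k t)) 1 0 := by
        have hid : HasDerivAt (fun t : ℝ => esymm n q (fun k => x k 0) + t) 1 0 :=
          HasDerivAt.const_add _ (hasDerivAt_id 0)
        exact hid.congr_of_eventuallyEq (hvar.mono fun t ht => ht)
      rw [hlhs, hder.unique h2, Pi.single_eq_same]
    · have hne : (j : ℕ) + 1 ≠ q := by
        intro h
        apply hcase
        apply Fin.ext
        simp only [hjq]
        omega
      have h2 : HasDerivAt (fun t => esymm n ((j : ℕ) + 1) (fun k => x k t)) 0 0 := by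
        have hconst : HasDerivAt (fun _ : ℝ => esymm n ((j : ℕ) + 1) (fun k => x k 0)) 0 0 :=
          hasDerivAt_const _ _
        exact hconst.congr_of_eventuallyEq
          (hfix.mono fun t ht => ht ((j : ℕ) + 1) (by omega) (by omega) hne)
      rw [hlhs, hder.unique h2, Pi.single_eq_of_ne hcase]
  -- identify the derivatives
  have hexp : n - 1 - (q - 1) = n - q := by omega
  have hdval : ∀ k, d k = (-1 : ℝ) ^ (q - 1) * (x k 0) ^ (n - q)
      / ∏ i ∈ Finset.univ.erase k, (x k 0 - x i 0) := by
    have h3 : (Bmat n a).mulVec ((Amat n a).mulVec d) = d := by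
      rw [Matrix.mulVec_mulVec, hBA, Matrix.one_mulVec]
    rw [hsys, Matrix.mulVec_single] at h3
    intro k
    have h4 := (congrFun h3 k).symm
    rw [MulOpposite.op_one, one_smul, Matrix.col_apply] at h4
    rw [h4]
    simp only [Bmat, Matrix.of_apply, hjq, hexp]
    rfl
  -- the zero-sum identity
  have hzero : ∑ k : Fin n, (x k 0) ^ (n - q)
      / ∏ i ∈ Finset.univ.erase k, (x k 0 - x i 0) = 0 := by
    have j0 : Fin n := ⟨0, by omega⟩
    have h5 := congrFun (congrFun hAB ⟨0, by omega⟩) jq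
    rw [Matrix.mul_apply, Matrix.one_apply_ne (by
      intro h
      have := congrArg Fin.val h
      simp only [hjq] at this
      omega)] at h5
    have h6 : ∀ k : Fin n, Amat n a (⟨0, by omega⟩ : Fin n) k * Bmat n a k jq
        = (-1 : ℝ) ^ (q - 1) * ((x k 0) ^ (n - q)
            / ∏ i ∈ Finset.univ.erase k, (x k 0 - x i 0)) := by
      intro k
      simp only [Amat, Bmat, Matrix.of_apply, hjq, hexp, Finset.powersetCard_zero,
        Finset.sum_singleton, Finset.prod_empty, one_mul]
      ring
    rw [Finset.sum_congr rfl fun k _ => h6 k, ← Finset.mul_sum] at h5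
    rcases mul_eq_zero.1 h5 with h | h
    · exact absurd h (pow_ne_zero _ (by norm_num))
    · exact h
  -- entropy derivative
  have hterm : ∀ k : Fin n, HasDerivAt (fun t => x k t * Real.log (x k t))
      (d k * Real.log (x k 0) + d k) 0 := by
    intro k
    have hlog : HasDerivAt (fun t => Real.log (x k t)) ((x k 0)⁻¹ * d k) 0 := by
      exact (Real.hasDerivAt_log (hpos k).ne').comp 0 (hd k)
    have h := (hd k).fun_mul hlog
    convert h using 1
    · rfl
    · rfl
    rw [← mul_assoc, mul_inv_cancel₀ (hpos k).ne', one_mul]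
  have hS : HasDerivAt (fun t => -∑ k, x k t * Real.log (x k t))
      (-(∑ k : Fin n, (d k * Real.log (x k 0) + d k))) 0 :=
    (HasDerivAt.fun_sum (fun k _ => hterm k)).fun_neg
  have hpow : (-1 : ℝ) ^ q = -(-1 : ℝ) ^ (q - 1) := by
    have hq : q - 1 + 1 = q := by omega
    conv_lhs => rw [← hq]
    rw [pow_succ]
    ring
  have hval : (-(∑ k : Fin n, (d k * Real.log (x k 0) + d k)))
      = (-1 : ℝ) ^ q * ∑ k, (x k 0) ^ (n - q) * Real.log (x k 0) /
        ∏ i ∈ Finset.univ.erase k, (x k 0 - x i 0) := by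
    rw [Finset.sum_add_distrib]
    have hsum_d : ∑ k : Fin n, d k = 0 := by
      calc ∑ k : Fin n, d k
          = ∑ k : Fin n, (-1 : ℝ) ^ (q - 1) * ((x k 0) ^ (n - q)
              / ∏ i ∈ Finset.univ.erase k, (x k 0 - x i 0)) := by
            refine Finset.sum_congr rfl fun k _ => ?_
            rw [hdval k]; ring
        _ = (-1 : ℝ) ^ (q - 1) * ∑ k : Fin n, ((x k 0) ^ (n - q)
              / ∏ i ∈ Finset.univ.erase k, (x k 0 - x i 0)) := by rw [Finset.mul_sum]
        _ = 0 := by rw [hzero, mul_zero]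
    rw [hsum_d, add_zero, Finset.mul_sum, ← Finset.sum_neg_distrib]
    refine Finset.sum_congr rfl fun k _ => ?_
    rw [hdval k, hpow]
    ring
  rw [← hval]
  exact hS
end
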